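/- Main inequality: For a finite regularized MDP with continuously differentiable strictly convex regularizer Ω and optimal regularized policy π*_Ω (the per-state maximizer defining V_Ω^⋆), for any policy π: E_{s∼μ^π}[ D_Ω(π(s,·), π*_Ω(s,·)) ] ≤ (1−γ)·E_{s∼ρ}[ V_Ω^⋆(s) − V_Ω^π(s) ]. -/

import Mathlib

/-- First-order optimality condition: if `q` maximizes `p ↦ ∑ a, p a * Q a - Ω p`
over the standard simplex, then the directional derivative at `q` towards any
`p` in the simplex is nonpositive. -/
lemma foc_aux {A : Type*} [Fintype A] (Ω : (A → ℝ) → ℝ) (hΩdiff : ContDiff ℝ 1 Ω)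
    (Q : A → ℝ) (p q : A → ℝ) (hp : p ∈ stdSimplex ℝ A) (hq : q ∈ stdSimplex ℝ A)
    (hmax : ∀ p' ∈ stdSimplex ℝ A, ∑ a, p' a * Q a - Ω p' ≤ ∑ a, q a * Q a - Ω q) :
    ∑ a, (p a - q a) * Q a ≤ fderiv ℝ Ω q (p - q) := by
  set v : A → ℝ := p - q with hv
  set c : ℝ → (A → ℝ) := fun t => q + t • v with hc
  have hc0 : c 0 = q := by simp [hc]
  have hmem : ∀ t ∈ Set.Icc (0:ℝ) 1, c t ∈ stdSimplex ℝ A := by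
    intro t ht
    have h := (convex_stdSimplex ℝ A) hq hp (by linarith [ht.2] : (0:ℝ) ≤ 1 - t) ht.1
      (by ring)
    convert h using 1
    funext a
    simp only [hc, hv, Pi.add_apply, Pi.smul_apply, Pi.sub_apply, smul_eq_mul]
    ring
  set cQ : ℝ := ∑ a, v a * Q a with hcQ
  set g : ℝ → ℝ := fun t => t * cQ - Ω (c t) with hg
  -- g t ≤ g 0 on [0,1]
  have hle : ∀ t ∈ Set.Icc (0:ℝ) 1, g t ≤ g 0 := by
    intro t ht
    have h := hmax (c t) (hmem t ht)
    have hsum : ∑ a, c t a * Q a = ∑ a, q a * Q a + t * cQ := by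
      simp only [hc, hcQ, Pi.add_apply, Pi.smul_apply, smul_eq_mul, Finset.mul_sum]
      rw [← Finset.sum_add_distrib]
      congr 1; funext a; ring
    simp only [hg, hc0]
    rw [hsum] at h
    linarith
  -- derivative of g at 0
  have hcderiv : HasDerivAt c v 0 := by
    have h1 : HasDerivAt (fun t : ℝ => t • v) ((1:ℝ) • v) 0 :=
      (hasDerivAt_id (0:ℝ)).smul_const v
    have h2 := h1.const_add q
    rw [one_smul] at h2
    exact h2
  have hΩd : HasFDerivAt Ω (fderiv ℝ Ω q) (c 0) := by
    rw [hc0]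
    exact (hΩdiff.differentiable one_ne_zero q).hasFDerivAt
  have hΩc : HasDerivAt (fun t => Ω (c t)) (fderiv ℝ Ω q v) 0 :=
    HasFDerivAt.comp_hasDerivAt (0:ℝ) hΩd hcderiv
  have hgd : HasDerivAt g (cQ - fderiv ℝ Ω q v) 0 := by
    have h1 : HasDerivAt (fun t : ℝ => t * cQ) cQ 0 := by
      simpa using (hasDerivAt_id (0:ℝ)).mul_const cQ
    exact h1.sub hΩc
  -- slope argument: derivative at 0 from the right is ≤ 0
  have hslope : Filter.Tendsto (slope g 0) (nhdsWithin 0 (Set.Ioi 0))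
      (nhds (cQ - fderiv ℝ Ω q v)) := by
    have h := (hgd.hasDerivWithinAt (s := Set.Ioi 0))
    rw [hasDerivWithinAt_iff_tendsto_slope] at h
    have hss : Set.Ioi (0:ℝ) \ {0} = Set.Ioi 0 := by
      ext x
      simp only [Set.mem_diff, Set.mem_Ioi, Set.mem_singleton_iff]
      exact ⟨fun h => h.1, fun h => ⟨h, by linarith⟩⟩
    rwa [hss] at h
  have hev : ∀ᶠ t in nhdsWithin (0:ℝ) (Set.Ioi 0), slope g 0 t ≤ 0 := by
    have hIoc : Set.Ioc (0:ℝ) 1 ∈ nhdsWithin (0:ℝ) (Set.Ioi 0) := by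
      have h1 : Set.Iio (1:ℝ) ∈ nhds (0:ℝ) := Iio_mem_nhds (by norm_num)
      filter_upwards [nhdsWithin_le_nhds h1, self_mem_nhdsWithin] with t h1 h2
      exact ⟨h2, le_of_lt h1⟩
    filter_upwards [hIoc] with t ht
    have hg0 : g t ≤ g 0 := hle t ⟨le_of_lt ht.1, ht.2⟩
    have heq : slope g 0 t = (g t - g 0) / (t - 0) := slope_def_field g 0 t
    rw [heq]
    apply div_nonpos_of_nonpos_of_nonneg <;> linarith [ht.1]
  have hd : cQ - fderiv ℝ Ω q v ≤ 0 := le_of_tendsto hslope hev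
  have hcQ' : cQ = ∑ a, (p a - q a) * Q a := by
    simp [hcQ, hv]
  linarith [hcQ' ▸ hd]

/-- Main inequality: in a finite regularized MDP with continuously differentiable
strictly convex regularizer `Ω` and optimal regularized policy `π⋆`, for any policy `π`,
`E_{s∼μ^π}[D_Ω(π(s,·), π⋆(s,·))] ≤ (1−γ)·E_{s∼ρ}[V_Ω^⋆(s) − V_Ω^π(s)]`. -/
theorem regularized_mdp_main_inequality
    {S A : Type*} [Fintype S] [Fintype A]
    (P : S → A → S → ℝ) (hP0 : ∀ s a s', 0 ≤ P s a s') (hP1 : ∀ s a, ∑ s', P s a s' = 1)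
    (r : S → A → ℝ) (ρ : S → ℝ) (hρ : ρ ∈ stdSimplex ℝ S)
    (γ : ℝ) (hγ0 : 0 ≤ γ) (hγ1 : γ < 1)
    (Ω : (A → ℝ) → ℝ) (hΩdiff : ContDiff ℝ 1 Ω)
    (hΩconv : StrictConvexOn ℝ (stdSimplex ℝ A) Ω)
    -- optimal regularized value functions and optimal policy
    (Qstar : S → A → ℝ) (Vstar : S → ℝ) (πstar : S → A → ℝ)
    (hπstar : ∀ s, πstar s ∈ stdSimplex ℝ A)
    (hQstar : ∀ s a, Qstar s a = r s a + γ * ∑ s', P s a s' * Vstar s')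
    (hVstar : ∀ s, Vstar s = ∑ a, πstar s a * Qstar s a - Ω (πstar s))
    (hmax : ∀ s, ∀ p ∈ stdSimplex ℝ A,
      ∑ a, p a * Qstar s a - Ω p ≤ ∑ a, πstar s a * Qstar s a - Ω (πstar s))
    -- an arbitrary policy `π` with its regularized value functions
    (π : S → A → ℝ) (hπ : ∀ s, π s ∈ stdSimplex ℝ A)
    (Qπ : S → A → ℝ) (Vπ : S → ℝ)
    (hQπ : ∀ s a, Qπ s a = r s a + γ * ∑ s', P s a s' * Vπ s')
    (hVπ : ∀ s, Vπ s = ∑ a, π s a * Qπ s a - Ω (π s))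
    -- discounted stationary distribution of `π`
    (μ : S → ℝ)
    (hμ : ∀ s', μ s' = (1 - γ) * ρ s' + γ * ∑ s, (∑ a, P s a s' * π s a) * μ s) :
    ∑ s, μ s * (Ω (π s) - Ω (πstar s) - fderiv ℝ Ω (πstar s) (π s - πstar s))
      ≤ (1 - γ) * ∑ s, ρ s * (Vstar s - Vπ s) := by
  classical
  -- transition kernel under π
  set M : S → S → ℝ := fun s s' => ∑ a, P s a s' * π s a with hM
  have hM0 : ∀ s s', 0 ≤ M s s' := fun s s' =>
    Finset.sum_nonneg fun a _ => mul_nonneg (hP0 s a s') ((hπ s).1 a)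
  have hM1 : ∀ s, ∑ s', M s s' = 1 := by
    intro s
    simp only [hM]
    rw [Finset.sum_comm]
    calc (∑ a, ∑ s', P s a s' * π s a) = ∑ a, π s a := by
          apply Finset.sum_congr rfl; intro a _
          rw [← Finset.sum_mul, hP1 s a, one_mul]
      _ = 1 := (hπ s).2
  have hμ' : ∀ s', μ s' = (1 - γ) * ρ s' + γ * ∑ s, M s s' * μ s := by
    intro s'; simp only [hM]; exact hμ s'
  -- μ is nonnegative
  have hμnn : ∀ s, 0 ≤ μ s := by
    set ν : S → ℝ := fun s => max (-μ s) 0 with hν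
    have hν0 : ∀ s, 0 ≤ ν s := fun s => le_max_right _ _
    have key : ∀ s', ν s' ≤ γ * ∑ s, M s s' * ν s := by
      intro s'
      have hsnn : 0 ≤ γ * ∑ s, M s s' * ν s :=
        mul_nonneg hγ0 (Finset.sum_nonneg fun s _ => mul_nonneg (hM0 s s') (hν0 s))
      refine max_le ?_ hsnn
      have h1 : -μ s' = -((1 - γ) * ρ s') - γ * ∑ s, M s s' * μ s := by
        rw [hμ' s']; ring
      have h2 : ∑ s, M s s' * (-μ s) ≤ ∑ s, M s s' * ν s :=
        Finset.sum_le_sum fun s _ =>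
          mul_le_mul_of_nonneg_left (le_max_left _ _) (hM0 s s')
      have h3 : ∑ s, M s s' * (-μ s) = -(∑ s, M s s' * μ s) := by
        rw [← Finset.sum_neg_distrib]; apply Finset.sum_congr rfl; intros; ring
      have h4 : 0 ≤ (1 - γ) * ρ s' := mul_nonneg (by linarith) (hρ.1 s')
      have h5 : γ * (∑ s, M s s' * (-μ s)) ≤ γ * ∑ s, M s s' * ν s :=
        mul_le_mul_of_nonneg_left h2 hγ0
      rw [h3] at h5
      nlinarith [h5]
    have hsum : ∑ s, ν s ≤ γ * ∑ s, ν s := by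
      calc ∑ s', ν s' ≤ ∑ s', γ * ∑ s, M s s' * ν s := Finset.sum_le_sum fun s' _ => key s'
        _ = γ * ∑ s', ∑ s, M s s' * ν s := by rw [← Finset.mul_sum]
        _ = γ * ∑ s, ν s := by
            congr 1
            rw [Finset.sum_comm]
            apply Finset.sum_congr rfl; intro s _
            rw [← Finset.sum_mul, hM1 s, one_mul]
    have hsnn : 0 ≤ ∑ s, ν s := Finset.sum_nonneg fun s _ => hν0 s
    have hzero : ∑ s, ν s = 0 := by nlinarith
    intro s
    have hz : ν s = 0 :=
      (Finset.sum_eq_zero_iff_of_nonneg (fun s _ => hν0 s)).1 hzero s (Finset.mem_univ s)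
    have hle : -μ s ≤ ν s := le_max_left _ _
    rw [hz] at hle
    linarith
  -- value gap and advantage-like quantities
  set δ : S → ℝ := fun s => Vstar s - Vπ s with hδ
  set g : S → ℝ := fun s => Vstar s - (∑ a, π s a * Qstar s a - Ω (π s)) with hgdef
  -- performance difference identity: δ s = g s + γ * ∑ s', M s s' * δ s'
  have hiden : ∀ s, δ s = g s + γ * ∑ s', M s s' * δ s' := by
    intro s
    have h1 : ∑ a, π s a * Qstar s a - ∑ a, π s a * Qπ s a
        = γ * ∑ s', M s s' * δ s' := by
      have lhs : ∑ a, π s a * Qstar s a - ∑ a, π s a * Qπ s a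
          = ∑ a, ∑ s', γ * (P s a s' * π s a) * δ s' := by
        rw [← Finset.sum_sub_distrib]
        apply Finset.sum_congr rfl; intro a _
        rw [hQstar, hQπ]
        have h2 : ∑ s', γ * (P s a s' * π s a) * δ s'
            = γ * π s a * (∑ s', P s a s' * Vstar s' - ∑ s', P s a s' * Vπ s') := by
          rw [← Finset.sum_sub_distrib, Finset.mul_sum]
          apply Finset.sum_congr rfl; intro s' _
          simp only [hδ]; ring
        rw [h2]; ring
      rw [lhs, Finset.sum_comm, Finset.mul_sum]
      apply Finset.sum_congr rfl; intro s' _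
      show ∑ a, γ * (P s a s' * π s a) * δ s' = γ * ((∑ a, P s a s' * π s a) * δ s')
      rw [Finset.sum_mul, Finset.mul_sum]
      apply Finset.sum_congr rfl; intros; ring
    have h2 := hVπ s
    simp only [hgdef, hδ]
    linarith [h1]
  -- Bregman divergence bounded by g via first-order condition
  have hDg : ∀ s, Ω (π s) - Ω (πstar s) - fderiv ℝ Ω (πstar s) (π s - πstar s) ≤ g s := by
    intro s
    have hfoc := foc_aux Ω hΩdiff (Qstar s) (π s) (πstar s) (hπ s) (hπstar s) (hmax s)
    have hsub : ∑ a, (π s a - πstar s a) * Qstar s a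
        = ∑ a, π s a * Qstar s a - ∑ a, πstar s a * Qstar s a := by
      rw [← Finset.sum_sub_distrib]; apply Finset.sum_congr rfl; intros; ring
    have hVs := hVstar s
    simp only [hgdef]
    rw [hsub] at hfoc
    linarith
  -- combine
  have step1 : ∑ s, μ s * (Ω (π s) - Ω (πstar s) - fderiv ℝ Ω (πstar s) (π s - πstar s))
      ≤ ∑ s, μ s * g s :=
    Finset.sum_le_sum fun s _ => mul_le_mul_of_nonneg_left (hDg s) (hμnn s)
  have step2 : ∑ s, μ s * g s = (1 - γ) * ∑ s, ρ s * δ s := by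
    have hg' : ∀ s, g s = δ s - γ * ∑ s', M s s' * δ s' := by
      intro s; linarith [hiden s]
    have hkey : ∀ s', γ * ∑ s, M s s' * μ s = μ s' - (1 - γ) * ρ s' := by
      intro s'; rw [hμ' s']; ring
    calc ∑ s, μ s * g s
        = ∑ s, (μ s * δ s - ∑ s', γ * (M s s' * μ s) * δ s') := by
          apply Finset.sum_congr rfl; intro s _
          have h : μ s * (γ * ∑ s', M s s' * δ s')
              = ∑ s', γ * (M s s' * μ s) * δ s' := by
            rw [Finset.mul_sum, Finset.mul_sum]
            apply Finset.sum_congr rfl; intros; ring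
          rw [hg' s, mul_sub, h]
      _ = ∑ s, μ s * δ s - ∑ s, ∑ s', γ * (M s s' * μ s) * δ s' := by
          rw [Finset.sum_sub_distrib]
      _ = ∑ s, μ s * δ s - ∑ s', (γ * ∑ s, M s s' * μ s) * δ s' := by
          congr 1
          rw [Finset.sum_comm]
          apply Finset.sum_congr rfl; intro s' _
          rw [Finset.mul_sum, Finset.sum_mul]
      _ = ∑ s, μ s * δ s - ∑ s', (μ s' - (1 - γ) * ρ s') * δ s' := by
          congr 1
          apply Finset.sum_congr rfl; intro s' _
          rw [hkey s']
      _ = (1 - γ) * ∑ s, ρ s * δ s := by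
          have h : ∑ s', (μ s' - (1 - γ) * ρ s') * δ s'
              = ∑ s', μ s' * δ s' - ∑ s', (1 - γ) * (ρ s' * δ s') := by
            rw [← Finset.sum_sub_distrib]
            apply Finset.sum_congr rfl; intros; ring
          rw [h, ← Finset.mul_sum]; ring
  calc ∑ s, μ s * (Ω (π s) - Ω (πstar s) - fderiv ℝ Ω (πstar s) (π s - πstar s))
      ≤ ∑ s, μ s * g s := step1
    _ = (1 - γ) * ∑ s, ρ s * δ s := step2
    _ = (1 - γ) * ∑ s, ρ s * (Vstar s - Vπ s) := by simp [hδ]
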